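/- Let g ≥ 3, r ≥ 1, s ≥ 1 and μ be integers with gcd(μ, 2g−2) = 1. If r divides g−1, or s divides g−1, or r divides 2, or s divides 2, then the set 𝒟₊(g,r,s,μ) ∪ 𝒟₋(g,r,s,μ) ∪ 𝒟̃₊(g,r,s,μ) ∪ 𝒟̃₋(g,r,s,μ) is infinite. -/
import Mathlib

/-- The set `𝒟_ε(g,r,s,μ)` of determinants `d ≥ 1` for which the Pell-type equation
`d·r²·y² = (rx + 2(g−1))² − 4(g−1)(εr − rs + g−1)` has a solution with
`x ≡ μy (mod 2g−2)`. -/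
def Dset (g r s μ ε : ℤ) : Set ℤ :=
  {d : ℤ | 1 ≤ d ∧ ∃ x y : ℤ, x ≡ μ * y [ZMOD (2 * g - 2)] ∧
    d * r ^ 2 * y ^ 2
      = (r * x + 2 * (g - 1)) ^ 2 - 4 * (g - 1) * (ε * r - r * s + (g - 1))}

lemma Dset_key (g r s μ : ℤ) (hg : 3 ≤ g) (hr : 1 ≤ r) (hs : 1 ≤ s)
    (hd : r ∣ 4 * (g - 1)) : (Dset g r s μ 1).Infinite := by
  obtain ⟨m, hm⟩ := hd
  have hm1 : 1 ≤ m := by nlinarith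
  set A : ℤ := (2 * g - 2) * r with hA
  have hA4 : 4 ≤ A := by nlinarith
  set X : ℕ → ℤ := fun n => μ + A * (n + 1 + μ.natAbs) with hX
  have hXpos : ∀ n : ℕ, 1 ≤ X n := by
    intro n
    have h1 : -μ ≤ (μ.natAbs : ℤ) := by
      simpa using Int.le_natAbs (a := -μ)
    have h2 : (0:ℤ) ≤ (n:ℤ) + 1 + μ.natAbs := by positivity
    have h3 : A * ((n:ℤ) + 1 + μ.natAbs) ≥ 4 * ((n:ℤ) + 1 + μ.natAbs) := by
      nlinarith
    simp only [hX]
    nlinarith [Int.ofNat_zero_le n]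
  set f : ℕ → ℤ := fun n => (X n) ^ 2 + m * (X n + s - 1) with hf
  refine Set.infinite_of_injective_forall_mem (f := f) ?_ ?_
  · have hmono : StrictMono f := by
      apply strictMono_nat_of_lt_succ
      intro n
      have h1 : X (n + 1) = X n + A := by
        simp only [hX]; push_cast; ring
      have h2 := hXpos n
      simp only [hf, h1]
      nlinarith
    exact hmono.injective
  · intro n
    refine ⟨?_, X n, 1, ?_, ?_⟩
    · have h2 := hXpos n
      simp only [hf]
      nlinarith
    · have : (2 * g - 2) ∣ μ * 1 - X n := by
        refine ⟨-(r * ((n:ℤ) + 1 + μ.natAbs)), ?_⟩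
        simp only [hX, hA]; ring
      exact (Int.modEq_iff_dvd.mpr this)
    · simp only [hf]
      linear_combination (-(r * (X n + s - 1))) * hm

/-- If `r | g−1`, or `s | g−1`, or `r | 2`, or `s | 2`, then
`𝒟₊ ∪ 𝒟₋ ∪ 𝒟̃₊ ∪ 𝒟̃₋` is infinite. -/
theorem Dset_union_infinite
    (g r s μ : ℤ) (hg : 3 ≤ g) (hr : 1 ≤ r) (hs : 1 ≤ s)
    (hcop : Int.gcd μ (2 * g - 2) = 1)
    (hdiv : r ∣ (g - 1) ∨ s ∣ (g - 1) ∨ r ∣ 2 ∨ s ∣ 2) :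
    (Dset g r s μ 1 ∪ Dset g r s μ (-1) ∪ Dset g s r μ 1 ∪ Dset g s r μ (-1)).Infinite := by
  have sub1 : Dset g r s μ 1 ⊆
      Dset g r s μ 1 ∪ Dset g r s μ (-1) ∪ Dset g s r μ 1 ∪ Dset g s r μ (-1) := by
    intro x hx; left; left; left; exact hx
  have sub3 : Dset g s r μ 1 ⊆
      Dset g r s μ 1 ∪ Dset g r s μ (-1) ∪ Dset g s r μ 1 ∪ Dset g s r μ (-1) := by
    intro x hx; left; right; exact hx
  rcases hdiv with h | h | h | h
  · exact (Dset_key g r s μ hg hr hs (Dvd.dvd.mul_left h 4)).mono sub1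
  · exact (Dset_key g s r μ hg hs hr (Dvd.dvd.mul_left h 4)).mono sub3
  · exact (Dset_key g r s μ hg hr hs (h.trans ⟨2 * (g - 1), by ring⟩)).mono sub1
  · exact (Dset_key g s r μ hg hs hr (h.trans ⟨2 * (g - 1), by ring⟩)).mono sub3
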